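/- Let t0 ∈ ℝ, let ξ : [t0, ∞) → [0, ∞) be absolutely continuous, let β : [t0, ∞) → [0, ∞) be locally integrable, and let C > 0 and M ≥ 0 be such that ∫_t^{t+1/(2C)} β(s) ds ≤ M for all t ≥ t0 and ξ'(t) + C·ξ(t) ≤ β(t) for almost every t ≥ t0. Then for all t ≥ t0, ξ(t) ≤ e^{−C(t−t0)}·ξ(t0) + M·e/(e^{1/2} − 1). -/

import Mathlib

open MeasureTheory Real


private lemma expC_hasDerivAt (C x : ℝ) :
    HasDerivAt (fun y => Real.exp (C * y)) (C * Real.exp (C * x)) x := by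
  simpa [mul_comm] using ((hasDerivAt_id x).const_mul C).exp

private lemma integral_expC (C a b : ℝ) :
    ∫ s in a..b, C * Real.exp (C * s) = Real.exp (C * b) - Real.exp (C * a) :=
  intervalIntegral.integral_eq_sub_of_hasDerivAt (fun x _ => expC_hasDerivAt C x)
    ((continuous_const.mul (Real.continuous_exp.comp
      (continuous_const.mul continuous_id))).intervalIntegrable _ _)

private lemma swap_key (t0 t1 C : ℝ) (D : ℝ → ℝ) (hC : 0 < C) (h01 : t0 ≤ t1)
    (hD : Measurable D) (hInt : IntegrableOn D (Set.Ioc t0 t1)) :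
    (∫ s in Set.Ioc t0 t1, C * Real.exp (C * s) * (∫ u in Set.Ioc t0 s, D u))
      = ∫ u in Set.Ioc t0 t1, D u * (Real.exp (C * t1) - Real.exp (C * u)) := by
  set μ := volume.restrict (Set.Ioc t0 t1) with hμ
  set P : ℝ × ℝ → ℝ := fun p => if p.2 ≤ p.1 then C * Real.exp (C * p.1) * D p.2 else 0 with hP
  have hPmeas : Measurable P := by
    apply Measurable.ite (measurableSet_le measurable_snd measurable_fst)
    · exact (measurable_const.mul (Real.measurable_exp.comp
        (measurable_fst.const_mul C))).mul (hD.comp measurable_snd)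
    · exact measurable_const
  have hone : Integrable (fun _ : ℝ => (1:ℝ)) μ := by
    rw [hμ]; exact (integrableOn_const measure_Ioc_lt_top.ne)
  have hDabs : Integrable (fun u => C * Real.exp (C * t1) * |D u|) μ := hInt.abs.const_mul _
  have hgint : Integrable (fun p : ℝ × ℝ => (1:ℝ) * (C * Real.exp (C * t1) * |D p.2|))
      (μ.prod μ) := hone.mul_prod hDabs
  have hprodeq : μ.prod μ
      = (volume.prod volume).restrict ((Set.Ioc t0 t1) ×ˢ (Set.Ioc t0 t1)) := by
    rw [hμ, Measure.prod_restrict]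
  have hPint : Integrable P (μ.prod μ) := by
    refine hgint.mono' hPmeas.aestronglyMeasurable ?_
    rw [hprodeq]
    filter_upwards [ae_restrict_mem (measurableSet_Ioc.prod measurableSet_Ioc)] with p hp
    obtain ⟨hp1, hp2⟩ := hp
    rw [hP]
    simp only [one_mul, Real.norm_eq_abs]
    split_ifs with h
    · calc |C * Real.exp (C * p.1) * D p.2|
          = C * Real.exp (C * p.1) * |D p.2| := by
            rw [abs_mul, abs_mul, abs_of_pos hC, abs_of_pos (Real.exp_pos _)]
        _ ≤ C * Real.exp (C * t1) * |D p.2| := by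
            have : Real.exp (C * p.1) ≤ Real.exp (C * t1) :=
              Real.exp_le_exp.2 (by nlinarith [hp1.2])
            exact mul_le_mul_of_nonneg_right
              (mul_le_mul_of_nonneg_left this hC.le) (abs_nonneg _)
    · rw [abs_zero]; positivity
  have hswap := MeasureTheory.integral_integral_swap (μ := μ) (ν := μ)
    (f := fun s u => P (s, u)) hPint
  have hL : (∫ s, (∫ u, P (s, u) ∂μ) ∂μ)
      = ∫ s in Set.Ioc t0 t1, C * Real.exp (C * s) * (∫ u in Set.Ioc t0 s, D u) := by
    rw [hμ]
    apply setIntegral_congr_fun measurableSet_Ioc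
    intro s hs
    dsimp only
    have h1 : (fun u => P (s, u))
        = (Set.Iic s).indicator (fun u => C * Real.exp (C * s) * D u) := by
      funext u; simp [hP, Set.indicator_apply, Set.mem_Iic]
    rw [h1, setIntegral_indicator measurableSet_Iic, Set.Ioc_inter_Iic,
      min_eq_right hs.2, MeasureTheory.integral_const_mul]
  have hR : (∫ u, (∫ s, P (s, u) ∂μ) ∂μ)
      = ∫ u in Set.Ioc t0 t1, D u * (Real.exp (C * t1) - Real.exp (C * u)) := by
    rw [hμ]
    apply setIntegral_congr_fun measurableSet_Ioc
    intro u hu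
    dsimp only
    have h1 : (fun s => P (s, u))
        = (Set.Ici u).indicator (fun s => C * Real.exp (C * s) * D u) := by
      funext s; simp [hP, Set.indicator_apply, Set.mem_Ici]
    have h2 : Set.Ioc t0 t1 ∩ Set.Ici u = Set.Icc u t1 := by
      ext x
      simp only [Set.mem_inter_iff, Set.mem_Ioc, Set.mem_Ici, Set.mem_Icc]
      constructor
      · rintro ⟨⟨_, hx2⟩, hx3⟩; exact ⟨hx3, hx2⟩
      · rintro ⟨hx1, hx2⟩; exact ⟨⟨lt_of_lt_of_le hu.1 hx1, hx2⟩, hx1⟩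
    rw [h1, setIntegral_indicator measurableSet_Ici, h2]
    rw [integral_mul_const, MeasureTheory.integral_Icc_eq_integral_Ioc,
      ← intervalIntegral.integral_of_le hu.2, integral_expC, mul_comm]
  rw [← hL, ← hR]
  exact hswap

private lemma block_bound (t0 C M : ℝ) (β : ℝ → ℝ) (hC : 0 < C) (hM : 0 ≤ M)
    (hβ_nonneg : ∀ t, t0 ≤ t → 0 ≤ β t)
    (hβint : ∀ a b, t0 ≤ a → a ≤ b → IntervalIntegrable β volume a b)
    (hsup : ∀ t, t0 ≤ t → ∫ s in t..(t + 1 / (2 * C)), β s ≤ M) :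
    ∀ t, t0 ≤ t → (∫ s in t0..t, Real.exp (-C * (t - s)) * β s)
        ≤ M / (1 - Real.exp (-(1/2 : ℝ))) := by
  have hTpos : (0:ℝ) < 1 / (2 * C) := by positivity
  set T := 1 / (2 * C) with hTdef
  have hCT : C * T = 1/2 := by rw [hTdef]; field_simp
  have hexp1 : Real.exp (-(1/2:ℝ)) < 1 := by
    rw [← Real.exp_zero]
    exact Real.exp_lt_exp.2 (by norm_num)
  have hden : 0 < 1 - Real.exp (-(1/2:ℝ)) := by linarith
  set K := M / (1 - Real.exp (-(1/2:ℝ))) with hK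
  have hKnonneg : 0 ≤ K := div_nonneg hM hden.le
  have hMK : M ≤ K := by
    rw [hK, le_div_iff₀ hden]; nlinarith [Real.exp_pos (-(1/2:ℝ))]
  have hwint : ∀ a b t : ℝ, t0 ≤ a → a ≤ b →
      IntervalIntegrable (fun s => Real.exp (-C * (t - s)) * β s) volume a b := by
    intro a b t ha hab
    exact (hβint a b ha hab).continuousOn_mul
      ((Real.continuous_exp.comp (by continuity)).continuousOn)
  have key : ∀ n : ℕ, ∀ t, t0 ≤ t → t ≤ t0 + n * T →
      (∫ s in t0..t, Real.exp (-C * (t - s)) * β s) ≤ K := by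
    intro n
    induction n with
    | zero =>
      intro t ht hle
      have h0 : t = t0 := le_antisymm (by simpa using hle) ht
      rw [h0]
      simpa using hKnonneg
    | succ n ih =>
      intro t ht hle
      by_cases hcase : t0 ≤ t - T
      · have h1 : t - T ≤ t := by linarith
        rw [← intervalIntegral.integral_add_adjacent_intervals
          (hwint t0 (t-T) t le_rfl hcase) (hwint (t-T) t t hcase h1)]
        have hpart2 : (∫ s in (t-T)..t, Real.exp (-C * (t - s)) * β s) ≤ M := by
          have hmono : (∫ s in (t-T)..t, Real.exp (-C * (t - s)) * β s)
              ≤ ∫ s in (t-T)..t, β s := by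
            apply intervalIntegral.integral_mono_on h1 (hwint (t-T) t t hcase h1)
              (hβint (t-T) t hcase h1)
            intro x hx
            have hb := hβ_nonneg x (le_trans hcase hx.1)
            have hw : Real.exp (-C * (t - x)) ≤ 1 := by
              rw [← Real.exp_zero]
              exact Real.exp_le_exp.2 (by nlinarith [hx.2])
            nlinarith
          have hs2 := hsup (t-T) hcase
          rw [sub_add_cancel] at hs2
          linarith
        have hpart1 : (∫ s in t0..(t-T), Real.exp (-C * (t - s)) * β s)
            ≤ Real.exp (-(1/2:ℝ)) * K := by
          have heq : (∫ s in t0..(t-T), Real.exp (-C * (t - s)) * β s)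
              = Real.exp (-(1/2:ℝ)) * ∫ s in t0..(t-T), Real.exp (-C * ((t-T) - s)) * β s := by
            rw [← intervalIntegral.integral_const_mul]
            apply intervalIntegral.integral_congr
            intro x _
            dsimp only
            have hexpq : (-C * (t - x)) = (-(1/2:ℝ)) + (-C * ((t - T) - x)) := by
              rw [hTdef]
              field_simp
              ring
            rw [hexpq, Real.exp_add, mul_assoc]
          have hIH := ih (t-T) hcase (by push_cast at hle ⊢; linarith)
          rw [heq]
          exact mul_le_mul_of_nonneg_left hIH (Real.exp_pos _).le
        have hsum : Real.exp (-(1/2:ℝ)) * K + M = K := by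
          have hKM : K * (1 - Real.exp (-(1/2:ℝ))) = M := by
            rw [hK, div_mul_cancel₀ _ hden.ne']
          linear_combination (-1 : ℝ) * hKM
        linarith
      · push_neg at hcase
        have htT : t ≤ t0 + T := by linarith
        have h1 : (∫ s in t0..t, Real.exp (-C * (t - s)) * β s) ≤ ∫ s in t0..t, β s := by
          apply intervalIntegral.integral_mono_on ht (hwint t0 t t le_rfl ht)
            (hβint t0 t le_rfl ht)
          intro x hx
          have hb := hβ_nonneg x hx.1
          have hw : Real.exp (-C * (t - x)) ≤ 1 := by
            rw [← Real.exp_zero]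
            exact Real.exp_le_exp.2 (by nlinarith [hx.2])
          nlinarith
        have h2 : (∫ s in t0..t, β s) ≤ ∫ s in t0..(t0 + T), β s := by
          rw [← intervalIntegral.integral_add_adjacent_intervals
            (hβint t0 t le_rfl ht) (hβint t (t0+T) ht htT)]
          have h3 : 0 ≤ ∫ s in t..(t0+T), β s :=
            intervalIntegral.integral_nonneg htT (fun x hx => hβ_nonneg x (le_trans ht hx.1))
          linarith
        have h4 := hsup t0 le_rfl
        linarith
  intro t ht
  obtain ⟨n, hn⟩ := exists_nat_ge ((t - t0) / T)
  apply key n t ht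
  rw [div_le_iff₀ hTpos] at hn
  linarith

/-- Specialization of the paper's Gronwall-type lemma with T = 1/(2C) (so that
CT = 1/2 and e^{2CT}/(e^{CT} - 1) = e/(e^{1/2} - 1)): if ξ : [t0,∞) → [0,∞) is
absolutely continuous (encoded by: ξ has derivative ξ' a.e. on [t0,∞) and satisfies
the fundamental theorem of calculus there), β : [t0,∞) → [0,∞) is locally integrable,
∫_t^{t+1/(2C)} β ≤ M for all t ≥ t0 and ξ' + C ξ ≤ β a.e. on [t0,∞), then
ξ(t) ≤ e^{-C(t-t0)} ξ(t0) + M e/(e^{1/2} - 1) for all t ≥ t0. -/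
theorem gronwall_uniform_in_time_half
    (t0 : ℝ) (ξ ξ' β : ℝ → ℝ) (C M : ℝ)
    (hC : 0 < C) (hM : 0 ≤ M)
    (hξ_nonneg : ∀ t, t0 ≤ t → 0 ≤ ξ t)
    (hβ_nonneg : ∀ t, t0 ≤ t → 0 ≤ β t)
    (hβ_loc : LocallyIntegrableOn β (Set.Ici t0))
    (hξ_deriv : ∀ᵐ t ∂(volume : Measure ℝ), t0 ≤ t → HasDerivAt ξ (ξ' t) t)
    (hξ_ftc : ∀ t, t0 ≤ t → ξ t - ξ t0 = ∫ s in t0..t, ξ' s)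
    (hsup : ∀ t, t0 ≤ t → ∫ s in t..(t + 1 / (2 * C)), β s ≤ M)
    (hineq : ∀ᵐ t ∂(volume : Measure ℝ), t0 ≤ t → ξ' t + C * ξ t ≤ β t) :
    ∀ t, t0 ≤ t →
      ξ t ≤ Real.exp (-C * (t - t0)) * ξ t0 +
        M * (Real.exp 1 / (Real.exp (1 / 2) - 1)) := by
  have hTpos : (0:ℝ) < 1 / (2 * C) := by positivity
  have hx1 : (1:ℝ) < Real.exp (1/2 : ℝ) := by
    rw [← Real.exp_zero]; exact Real.exp_lt_exp.2 (by norm_num)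
  have hxx : Real.exp (1/2:ℝ) * Real.exp (1/2:ℝ) = Real.exp 1 := by
    rw [← Real.exp_add]; norm_num
  have hexp1 : Real.exp (-(1/2:ℝ)) < 1 := by
    rw [← Real.exp_zero]; exact Real.exp_lt_exp.2 (by norm_num)
  have hden : (0:ℝ) < 1 - Real.exp (-(1/2:ℝ)) := by linarith
  have hxpos : (0:ℝ) < Real.exp (1/2:ℝ) - 1 := by linarith
  have hKle : M / (1 - Real.exp (-(1/2:ℝ))) ≤ M * (Real.exp 1 / (Real.exp (1/2) - 1)) := by
    have hinv : Real.exp (-(1/2:ℝ)) = (Real.exp (1/2:ℝ))⁻¹ := Real.exp_neg _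
    have h1 : 1 - (Real.exp (1/2:ℝ))⁻¹ = (Real.exp (1/2:ℝ) - 1) / Real.exp (1/2:ℝ) := by
      field_simp
    rw [hinv, h1, div_div_eq_mul_div, ← hxx, ← mul_div_assoc,
      div_le_div_iff₀ hxpos hxpos]
    nlinarith [mul_nonneg (mul_nonneg hM (Real.exp_pos (1/2:ℝ)).le)
      (sq_nonneg (Real.exp (1/2:ℝ) - 1))]
  have h2M : 2 * M ≤ M * (Real.exp 1 / (Real.exp (1/2:ℝ) - 1)) := by
    rw [← hxx, ← mul_div_assoc, le_div_iff₀ hxpos]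
    nlinarith [mul_nonneg hM (sq_nonneg (Real.exp (1/2:ℝ) - 1))]
  have hβint : ∀ a b : ℝ, t0 ≤ a → a ≤ b → IntervalIntegrable β volume a b := by
    intro a b ha hab
    have h1 : IntegrableOn β (Set.Icc a b) volume :=
      hβ_loc.integrableOn_compact_subset
        (Set.Icc_subset_Ici_self.trans (Set.Ici_subset_Ici.2 ha)) isCompact_Icc
    exact IntegrableOn.intervalIntegrable (by rwa [Set.uIcc_of_le hab])
  set D : ℝ → ℝ := deriv ξ with hDdef
  have hDmeas : Measurable D := measurable_deriv ξ
  have hDD : ∀ᵐ t ∂(volume : Measure ℝ), t0 ≤ t → ξ' t = D t := by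
    filter_upwards [hξ_deriv] with t ht h0
    exact ((ht h0).deriv).symm
  have haeIoc : ∀ b : ℝ, t0 ≤ b → ξ' =ᵐ[volume.restrict (Set.Ioc t0 b)] D := by
    intro b hb
    filter_upwards [ae_restrict_mem measurableSet_Ioc, ae_restrict_of_ae hDD] with x h1 h2
    exact h2 h1.1.le
  have hftc : ∀ b : ℝ, t0 ≤ b → ξ b - ξ t0 = ∫ s in t0..b, D s := by
    intro b hb
    rw [intervalIntegral.integral_of_le hb, ← integral_congr_ae (haeIoc b hb),
      ← intervalIntegral.integral_of_le hb]
    exact hξ_ftc b hb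
  intro t1 ht1
  by_cases hIntD : IntervalIntegrable D volume t0 t1
  · -- MAIN CASE: ξ' integrable on [t0, t1]
    have hIoc : IntegrableOn D (Set.Ioc t0 t1) volume := hIntD.1
    set F : ℝ → ℝ := fun s => ∫ u in t0..s, D u with hFdef
    have hFcont : ContinuousOn F (Set.Icc t0 t1) := by
      have h1 := intervalIntegral.continuousOn_primitive_interval (a := t0) (b := t1)
        (μ := volume) (f := D) (by
          rw [Set.uIcc_of_le ht1]
          exact (integrableOn_Icc_iff_integrableOn_Ioc (f := D) (a := t0) (b := t1)).2 hIoc)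
      rwa [Set.uIcc_of_le ht1] at h1
    have hξeqF : ∀ s, t0 ≤ s → ξ s = ξ t0 + F s := by
      intro s hs
      have h1 := hftc s hs
      simp only [hFdef]
      linarith
    have hξcont : ContinuousOn ξ (Set.Icc t0 t1) := by
      apply ContinuousOn.congr (continuousOn_const.add hFcont)
      intro s hs
      exact hξeqF s hs.1
    have hexpCont : Continuous fun s : ℝ => Real.exp (C * s) :=
      Real.continuous_exp.comp (continuous_const.mul continuous_id)
    have hI1 : IntervalIntegrable (fun s => Real.exp (C * s) * D s) volume t0 t1 :=
      hIntD.continuousOn_mul hexpCont.continuousOn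
    have hI2 : IntervalIntegrable (fun s => C * Real.exp (C * s) * ξ s) volume t0 t1 := by
      apply ContinuousOn.intervalIntegrable
      rw [Set.uIcc_of_le ht1]
      exact ((continuous_const.mul hexpCont).continuousOn).mul hξcont
    have hIF : IntervalIntegrable (fun s => C * Real.exp (C * s) * F s) volume t0 t1 := by
      apply ContinuousOn.intervalIntegrable
      rw [Set.uIcc_of_le ht1]
      exact ((continuous_const.mul hexpCont).continuousOn).mul hFcont
    have hintD_eq : (∫ s in t0..t1, D s) = ξ t1 - ξ t0 := (hftc t1 ht1).symm
    have hswap : (∫ s in t0..t1, C * Real.exp (C * s) * F s)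
        = Real.exp (C * t1) * (ξ t1 - ξ t0) - ∫ s in t0..t1, Real.exp (C * s) * D s := by
      rw [intervalIntegral.integral_of_le ht1]
      have h1 : (∫ s in Set.Ioc t0 t1, C * Real.exp (C * s) * F s)
          = ∫ s in Set.Ioc t0 t1, C * Real.exp (C * s) * (∫ u in Set.Ioc t0 s, D u) := by
        apply setIntegral_congr_fun measurableSet_Ioc
        intro s hs
        dsimp only
        rw [hFdef]
        dsimp only
        rw [intervalIntegral.integral_of_le hs.1.le]
      rw [h1, swap_key t0 t1 C D hC ht1 hDmeas hIoc]
      have h2 : (∫ u in Set.Ioc t0 t1, D u * (Real.exp (C * t1) - Real.exp (C * u)))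
          = ∫ u in t0..t1, (Real.exp (C * t1) * D u - Real.exp (C * u) * D u) := by
        rw [intervalIntegral.integral_of_le ht1]
        apply setIntegral_congr_fun measurableSet_Ioc
        intro u _
        dsimp only
        ring
      rw [h2, intervalIntegral.integral_sub (hIntD.const_mul _) hI1,
        intervalIntegral.integral_const_mul, hintD_eq]
    have hkey : (∫ s in t0..t1, Real.exp (C * s) * (D s + C * ξ s))
        = Real.exp (C * t1) * ξ t1 - Real.exp (C * t0) * ξ t0 := by
      have e1 : (∫ s in t0..t1, Real.exp (C * s) * (D s + C * ξ s))
          = (∫ s in t0..t1, Real.exp (C * s) * D s)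
            + ∫ s in t0..t1, C * Real.exp (C * s) * ξ s := by
        rw [← intervalIntegral.integral_add hI1 hI2]
        apply intervalIntegral.integral_congr
        intro x _
        dsimp only
        ring
      have hconstI : IntervalIntegrable (fun s => ξ t0 * (C * Real.exp (C * s))) volume t0 t1 :=
        (continuous_const.mul (continuous_const.mul hexpCont)).intervalIntegrable _ _
      have e2 : (∫ s in t0..t1, C * Real.exp (C * s) * ξ s)
          = (∫ s in t0..t1, ξ t0 * (C * Real.exp (C * s)))
            + ∫ s in t0..t1, C * Real.exp (C * s) * F s := by
        rw [← intervalIntegral.integral_add hconstI hIF]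
        apply intervalIntegral.integral_congr
        intro x hx
        rw [Set.uIcc_of_le ht1] at hx
        dsimp only
        rw [hξeqF x hx.1]
        ring
      have e3 : (∫ s in t0..t1, ξ t0 * (C * Real.exp (C * s)))
          = ξ t0 * (Real.exp (C * t1) - Real.exp (C * t0)) := by
        rw [intervalIntegral.integral_const_mul, integral_expC]
      rw [e1, e2, e3, hswap]
      ring
    have hβexp : IntervalIntegrable (fun s => Real.exp (C * s) * β s) volume t0 t1 :=
      (hβint t0 t1 le_rfl ht1).continuousOn_mul hexpCont.continuousOn
    have hIsum : IntervalIntegrable (fun s => Real.exp (C * s) * (D s + C * ξ s)) volume t0 t1 := by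
      have h1 : (fun s => Real.exp (C * s) * (D s + C * ξ s))
          = fun s => Real.exp (C * s) * D s + C * Real.exp (C * s) * ξ s := by
        funext s; ring
      rw [h1]; exact hI1.add hI2
    have hle : (∫ s in t0..t1, Real.exp (C * s) * (D s + C * ξ s))
        ≤ ∫ s in t0..t1, Real.exp (C * s) * β s := by
      apply intervalIntegral.integral_mono_ae_restrict ht1 hIsum hβexp
      filter_upwards [ae_restrict_mem measurableSet_Icc, ae_restrict_of_ae hineq,
        ae_restrict_of_ae hDD] with x hx h1 h2
      have h3 := h1 hx.1
      have h4 := h2 hx.1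
      have h5 : D x + C * ξ x ≤ β x := by rw [← h4]; exact h3
      exact mul_le_mul_of_nonneg_left h5 (Real.exp_pos _).le
    have hmain : Real.exp (C * t1) * ξ t1
        ≤ Real.exp (C * t0) * ξ t0 + ∫ s in t0..t1, Real.exp (C * s) * β s := by
      rw [hkey] at hle
      linarith
    have hJeq : (∫ s in t0..t1, Real.exp (-C * (t1 - s)) * β s)
        = Real.exp (-(C * t1)) * ∫ s in t0..t1, Real.exp (C * s) * β s := by
      rw [← intervalIntegral.integral_const_mul]
      apply intervalIntegral.integral_congr
      intro x _
      dsimp only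
      rw [← mul_assoc, ← Real.exp_add]
      congr 2
      ring
    have hfin : ξ t1 ≤ Real.exp (-C * (t1 - t0)) * ξ t0
        + ∫ s in t0..t1, Real.exp (-C * (t1 - s)) * β s := by
      have hpos := Real.exp_pos (-(C * t1))
      have h6 := mul_le_mul_of_nonneg_left hmain hpos.le
      have h7 : Real.exp (-(C * t1)) * (Real.exp (C * t1) * ξ t1) = ξ t1 := by
        rw [← mul_assoc, ← Real.exp_add]; simp
      have h8 : Real.exp (-(C * t1)) * Real.exp (C * t0) = Real.exp (-C * (t1 - t0)) := by
        rw [← Real.exp_add]; congr 1; ring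
      rw [mul_add, h7, ← mul_assoc, h8] at h6
      rw [hJeq]
      linarith
    have hblock := block_bound t0 C M β hC hM hβ_nonneg hβint hsup t1 ht1
    have hterm : 0 ≤ Real.exp (-C * (t1 - t0)) * ξ t0 :=
      mul_nonneg (Real.exp_pos _).le (hξ_nonneg t0 le_rfl)
    linarith
  · -- JUNK CASE: ξ' not integrable on [t0, t1]
    have hconst : ∀ b, t1 ≤ b → ξ b = ξ t0 := by
      intro b hb
      have hb0 : t0 ≤ b := le_trans ht1 hb
      have hni : ¬ IntervalIntegrable ξ' volume t0 b := by
        intro h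
        apply hIntD
        have hD' : IntervalIntegrable D volume t0 b := by
          constructor
          · exact h.1.congr (haeIoc b hb0)
          · rw [Set.Ioc_eq_empty (not_lt.2 hb0)]
            exact integrableOn_empty
        exact hD'.mono_set
          (by rw [Set.uIcc_of_le ht1, Set.uIcc_of_le hb0]
              exact Set.Icc_subset_Icc le_rfl hb)
      have h9 := hξ_ftc b hb0
      rw [intervalIntegral.integral_undef hni] at h9
      linarith
    have hzero : ∀ᵐ t ∂(volume : Measure ℝ), t1 < t → ξ' t = 0 := by
      filter_upwards [hξ_deriv] with t ht hmem
      have h1 : HasDerivAt ξ (ξ' t) t := ht (le_trans ht1 hmem.le)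
      have h2 : (fun _ : ℝ => ξ t0) =ᶠ[nhds t] ξ := by
        filter_upwards [Ioi_mem_nhds hmem] with y hy
        exact (hconst y hy.le).symm
      exact (h1.congr_of_eventuallyEq h2).unique (hasDerivAt_const t (ξ t0))
    set a : ℝ := t1 + 1 with hadef
    have ha0 : t0 ≤ a := by rw [hadef]; linarith
    have haT : a ≤ a + 1 / (2 * C) := by linarith
    have hβi : IntegrableOn β (Set.Ioc a (a + 1 / (2 * C))) volume := (hβint a _ ha0 haT).1
    have hae2 : (fun _ : ℝ => C * ξ t0)
        ≤ᵐ[volume.restrict (Set.Ioc a (a + 1 / (2 * C)))] β := by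
      filter_upwards [ae_restrict_mem measurableSet_Ioc, ae_restrict_of_ae hineq,
        ae_restrict_of_ae hzero] with x hx h1 h2
      have hx1 : t1 < x := by
        have := hx.1
        rw [hadef] at this
        linarith
      have h3 := h1 (by linarith : t0 ≤ x)
      have h4 := h2 hx1
      have h5 : ξ x = ξ t0 := hconst x hx1.le
      rw [h4, h5, zero_add] at h3
      exact h3
    have hmono := setIntegral_mono_ae_restrict
      (integrableOn_const measure_Ioc_lt_top.ne : IntegrableOn (fun _ : ℝ => C * ξ t0) (Set.Ioc a (a + 1 / (2 * C))) volume) hβi hae2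
    rw [setIntegral_const] at hmono
    have hvol : (volume (Set.Ioc a (a + 1 / (2 * C)))).toReal = 1 / (2 * C) := by
      rw [Real.volume_Ioc]
      rw [show a + 1 / (2 * C) - a = 1 / (2 * C) by ring]
      exact ENNReal.toReal_ofReal hTpos.le
    rw [measureReal_def, hvol] at hmono
    have hsupa := hsup a ha0
    rw [intervalIntegral.integral_of_le haT] at hsupa
    have hξt0 : ξ t0 ≤ 2 * M := by
      have hsm : (1 / (2 * C)) * (C * ξ t0) ≤ M := by
        simp only [smul_eq_mul] at hmono
        linarith
      have heq2 : (1 / (2 * C)) * (C * ξ t0) = ξ t0 / 2 := by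
        field_simp
      rw [heq2] at hsm
      linarith
    have hterm : 0 ≤ Real.exp (-C * (t1 - t0)) * ξ t0 :=
      mul_nonneg (Real.exp_pos _).le (hξ_nonneg t0 le_rfl)
    have hfinal : ξ t1 = ξ t0 := hconst t1 le_rfl
    rw [hfinal]
    linarith
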